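/- Let G be a digraph of order n with minimum out-degree at least 1, and let t ≥ 1 be the number of vertices of out-degree exactly 1. Then G contains a directed cycle of length at most ⌈(n + t − 1)/2⌉. -/
import Mathlib

/-- A directed cycle of length `m` in the digraph with arc relation `A`. -/
def IsCycleOn {V : Type*} (A : V → V → Prop) (m : ℕ) (c : ZMod m → V) : Prop :=
  2 ≤ m ∧ Function.Injective c ∧ ∀ i, A (c i) (c (i + 1))

namespace ShenAux

open Finset

universe u

lemma natCard_filter {V : Type u} [Fintype V] (p : V → Prop) [DecidablePred p] :
    Nat.card {x // p x} = (Finset.univ.filter p).card := by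
  rw [Nat.card_eq_fintype_card, Fintype.card_subtype]

/-- The key inductive step, for `t ≥ 1`. -/
lemma step {V : Type u} [Fintype V] (A : V → V → Prop)
    (IH : ∀ (W : Type u) [Fintype W] (B : W → W → Prop), Fintype.card W < Fintype.card V →
      (∀ v, ¬ B v v) → (∀ v, 1 ≤ Nat.card {w // B v w}) → Nonempty W →
      ∃ m c, IsCycleOn B m c ∧
        m ≤ (Fintype.card W + max (Nat.card {u : W // Nat.card {w : W // B u w} = 1}) 1) / 2)
    (hloop : ∀ v, ¬ A v v) (hdeg : ∀ v, 1 ≤ Nat.card {w // A v w})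
    (ht1 : 1 ≤ Nat.card {u : V // Nat.card {w : V // A u w} = 1}) :
    ∃ m c, IsCycleOn A m c ∧
      m ≤ (Fintype.card V + Nat.card {u : V // Nat.card {w : V // A u w} = 1}) / 2 := by
  classical
  set n := Fintype.card V with hn
  set N : V → Finset V := fun v => Finset.univ.filter (fun w => A v w) with hN
  have hNcard : ∀ v, Nat.card {w // A v w} = (N v).card := fun v => natCard_filter _
  have hdegN : ∀ v, 1 ≤ (N v).card := fun v => (hNcard v) ▸ hdeg v
  have hmemN : ∀ v w, w ∈ N v ↔ A v w := by intro v w; simp [hN]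
  set U : Finset V := Finset.univ.filter (fun v => (N v).card = 1) with hU
  have htU : Nat.card {u : V // Nat.card {w : V // A u w} = 1} = U.card := by
    rw [natCard_filter]
    congr 1
    ext x
    simp only [Finset.mem_filter, Finset.mem_univ, true_and, hU]
    rw [hNcard x]
  rw [htU] at ht1 ⊢
  set t := U.card with ht
  have htn : t ≤ n := by
    have := Finset.card_le_univ U
    simpa [hn, ht] using this
  set inU : V → ℕ := fun q => (U.filter (fun x => A x q)).card with hinU
  set W2 : Finset V := Finset.univ.filter (fun v => (N v).card = 2) with hW2
  set inW2 : V → ℕ := fun q => (W2.filter (fun x => A x q)).card with hinW2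
  by_cases hdel : ∃ q : V, inU q = 0 ∧ inW2 q ≤ 1 + (if (N q).card = 1 then 1 else 0)
  · -- CASE 1: deletable vertex exists
    obtain ⟨q, hmq, hkq⟩ := hdel
    have hn1 : 1 ≤ n := by
      have : (0:ℕ) < n := by
        rw [hn]
        exact Fintype.card_pos_iff.mpr ⟨q⟩
      omega
    have hV' : Fintype.card {x : V // x ≠ q} = n - 1 := by
      simp [hn]
    -- out-neighbourhoods in the deleted graph
    have hsub : ∀ x : {x : V // x ≠ q},
        Nat.card {w : {y : V // y ≠ q} // A x.1 w.1} = ((N x.1).erase q).card := by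
      intro x
      have e : {w : {y : V // y ≠ q} // A x.1 w.1} ≃ {w : V // A x.1 w ∧ w ≠ q} :=
        { toFun := fun w => ⟨w.1.1, w.2, w.1.2⟩
          invFun := fun w => ⟨⟨w.1, w.2.2⟩, w.2.1⟩
          left_inv := fun w => rfl
          right_inv := fun w => rfl }
      rw [Nat.card_congr e, natCard_filter]
      congr 1
      ext w
      simp only [Finset.mem_erase, Finset.mem_filter, Finset.mem_univ, true_and, hmemN]
      tauto
    have hdeg' : ∀ x : {x : V // x ≠ q}, 1 ≤ Nat.card {w : {y : V // y ≠ q} // A x.1 w.1} := by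
      intro x
      rw [hsub x]
      by_contra hcon
      push_neg at hcon
      have h0 : (N x.1).erase q = ∅ := Finset.card_eq_zero.mp (by omega)
      obtain ⟨w, hw⟩ := Finset.card_pos.mp (by have := hdegN x.1; omega : 0 < (N x.1).card)
      have hwq : ∀ y ∈ N x.1, y = q := by
        intro y hy
        by_contra hne
        have : y ∈ (N x.1).erase q := Finset.mem_erase.mpr ⟨hne, hy⟩
        simp [h0] at this
      have hNxq : N x.1 = {q} := by
        apply Finset.eq_singleton_iff_unique_mem.mpr
        exact ⟨(hwq w hw) ▸ hw, hwq⟩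
      have hxU : x.1 ∈ U := by
        simp [hU, hNxq]
      have hmem : x.1 ∈ U.filter (fun y => A y q) := by
        refine Finset.mem_filter.mpr ⟨hxU, ?_⟩
        rw [← hmemN, hNxq]
        exact Finset.mem_singleton_self q
      have : 0 < inU q := by
        rw [hinU]
        exact Finset.card_pos.mpr ⟨x.1, hmem⟩
      omega
    have hne' : Nonempty {x : V // x ≠ q} := by
      apply Fintype.card_pos_iff.mp
      rw [hV']
      -- need n ≥ 2
      obtain ⟨w, hw⟩ := Finset.card_pos.mp (by have := hdegN q; omega : 0 < (N q).card)
      have hwq : w ≠ q := by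
        intro h
        exact hloop q (by rw [← hmemN]; exact h ▸ hw)
      have : 2 ≤ n := by
        rw [hn]
        exact Fintype.one_lt_card_iff.mpr ⟨w, q, hwq⟩
      omega
    obtain ⟨m, c, hcyc, hbound⟩ := IH {x : V // x ≠ q} (fun a b => A a.1 b.1)
      (by rw [hV']; omega) (fun a => hloop a.1) hdeg' hne'
    -- bound the number of out-degree-one vertices in the deleted graph
    set T' : Finset {x : V // x ≠ q} :=
      Finset.univ.filter (fun x : {x : V // x ≠ q} => ((N x.1).erase q).card = 1) with hT'
    have ht'eq : Nat.card {u : {x : V // x ≠ q} //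
        Nat.card {w : {y : V // y ≠ q} // A u.1 w.1} = 1} = T'.card := by
      rw [natCard_filter]
      congr 1
      ext x
      simp only [Finset.mem_filter, Finset.mem_univ, true_and, hT']
      rw [hsub x]
    have ht'le : T'.card ≤ t + 1 := by
      have hmap : ∀ x ∈ T', x.1 ∈ (U.erase q) ∪ (W2.filter (fun y => A y q)) := by
        intro x hx
        have hx1 : ((N x.1).erase q).card = 1 := (Finset.mem_filter.mp hx).2
        by_cases hqmem : q ∈ N x.1
        · have : (N x.1).card = 2 := by
            have := Finset.card_erase_of_mem hqmem
            have := hdegN x.1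
            omega
          apply Finset.mem_union_right
          refine Finset.mem_filter.mpr ⟨?_, (hmemN _ _).mp hqmem⟩
          simp [hW2, this]
        · have : (N x.1).card = 1 := by
            rw [Finset.erase_eq_of_notMem hqmem] at hx1
            exact hx1
          apply Finset.mem_union_left
          refine Finset.mem_erase.mpr ⟨x.2, ?_⟩
          simp [hU, this]
      have hinj : Set.InjOn (fun x : {x : V // x ≠ q} => x.1) ↑T' :=
        Subtype.val_injective.injOn
      have h1 : T'.card ≤ ((U.erase q) ∪ (W2.filter (fun y => A y q))).card :=
        Finset.card_le_card_of_injOn _ hmap hinj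
      have h2 : ((U.erase q) ∪ (W2.filter (fun y => A y q))).card ≤
          (U.erase q).card + inW2 q := by
        rw [hinW2]
        exact Finset.card_union_le _ _
      by_cases hq1 : (N q).card = 1
      · have hqU : q ∈ U := by simp [hU, hq1]
        have hUe : (U.erase q).card = t - 1 := by
          rw [Finset.card_erase_of_mem hqU, ht]
        have hk2 : inW2 q ≤ 2 := by
          rw [if_pos hq1] at hkq; omega
        omega
      · have hUe : (U.erase q).card ≤ t := by
          rw [ht]
          exact Finset.card_le_card (Finset.erase_subset q U)
        have hk1 : inW2 q ≤ 1 := by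
          rw [if_neg hq1] at hkq; omega
        omega
    refine ⟨m, fun i => (c i).1, ⟨hcyc.1, Subtype.val_injective.comp hcyc.2.1,
      fun i => hcyc.2.2 i⟩, ?_⟩
    rw [hV', ht'eq] at hbound
    have hmax : max T'.card 1 ≤ t + 1 := max_le ht'le (by omega)
    have : (n - 1) + max T'.card 1 ≤ n + t := by omega
    calc m ≤ ((n - 1) + max T'.card 1) / 2 := hbound
      _ ≤ (n + t) / 2 := Nat.div_le_div_right this
  · -- CASE 2: no deletable vertex: out-degree-one vertices form a permutation
    push_neg at hdel
    have hforced : ∀ q, inU q = 0 → 2 + (if (N q).card = 1 then 1 else 0) ≤ inW2 q := by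
      intro q h
      have := hdel q h
      omega
    -- double counting
    have hsum_inU : ∑ q : V, inU q = t := by
      calc ∑ q : V, inU q = ∑ q : V, ∑ x ∈ U, (if A x q then 1 else 0) := by
            apply Finset.sum_congr rfl
            intro q _
            simp only [hinU]
            rw [Finset.card_filter]
        _ = ∑ x ∈ U, ∑ q : V, (if A x q then 1 else 0) := Finset.sum_comm
        _ = ∑ x ∈ U, (N x).card := by
            apply Finset.sum_congr rfl
            intro x _
            simp only [hN]
            rw [Finset.card_filter]
        _ = ∑ x ∈ U, 1 := by
            apply Finset.sum_congr rfl
            intro x hx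
            rw [hU] at hx
            exact (Finset.mem_filter.mp hx).2
        _ = t := by simp [ht]
    have hsum_inW2 : ∑ q : V, inW2 q = 2 * W2.card := by
      calc ∑ q : V, inW2 q = ∑ q : V, ∑ x ∈ W2, (if A x q then 1 else 0) := by
            apply Finset.sum_congr rfl
            intro q _
            simp only [hinW2]
            rw [Finset.card_filter]
        _ = ∑ x ∈ W2, ∑ q : V, (if A x q then 1 else 0) := Finset.sum_comm
        _ = ∑ x ∈ W2, (N x).card := by
            apply Finset.sum_congr rfl
            intro x _
            simp only [hN]
            rw [Finset.card_filter]
        _ = ∑ x ∈ W2, 2 := by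
            apply Finset.sum_congr rfl
            intro x hx
            rw [hW2] at hx
            exact (Finset.mem_filter.mp hx).2
        _ = 2 * W2.card := by
            rw [Finset.sum_const, smul_eq_mul, mul_comm]
    -- partition of the vertex set by out-degree
    set W3 : Finset V := Finset.univ.filter (fun v => ¬ (N v).card = 1 ∧ ¬ (N v).card = 2)
      with hW3
    have hpart : t + W2.card + W3.card = n := by
      have h1 : (Finset.univ.filter (fun v => (N v).card = 1)).card +
          (Finset.univ.filter (fun v => ¬ (N v).card = 1)).card = n := by
        rw [hn, ← Finset.card_univ]
        exact Finset.card_filter_add_card_filter_not _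
      have h2 : ((Finset.univ.filter (fun v => ¬ (N v).card = 1)).filter
            (fun v => (N v).card = 2)).card +
          ((Finset.univ.filter (fun v => ¬ (N v).card = 1)).filter
            (fun v => ¬ (N v).card = 2)).card =
          (Finset.univ.filter (fun v => ¬ (N v).card = 1)).card :=
        Finset.card_filter_add_card_filter_not _
      have e2 : (Finset.univ.filter (fun v => ¬ (N v).card = 1)).filter
          (fun v => (N v).card = 2) = W2 := by
        rw [Finset.filter_filter, hW2]
        apply Finset.filter_congr
        intro x _
        constructor
        · exact fun h => h.2
        · intro h; exact ⟨by omega, h⟩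
      have e3 : (Finset.univ.filter (fun v => ¬ (N v).card = 1)).filter
          (fun v => ¬ (N v).card = 2) = W3 := by
        rw [Finset.filter_filter, hW3]
      rw [e2, e3] at h2
      rw [hU] at ht
      omega
    -- the two classes
    set B : Finset V := Finset.univ.filter (fun q => inU q = 0) with hB
    set Bc : Finset V := Finset.univ.filter (fun q => ¬ inU q = 0) with hBc
    have hcards : B.card + Bc.card = n := by
      rw [hB, hBc, hn, ← Finset.card_univ]
      exact Finset.card_filter_add_card_filter_not _
    have hBc_le : Bc.card ≤ t := by
      calc Bc.card = ∑ q ∈ Bc, 1 := by simp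
        _ ≤ ∑ q ∈ Bc, inU q := by
            apply Finset.sum_le_sum
            intro q hq
            have := (Finset.mem_filter.mp hq).2
            omega
        _ ≤ ∑ q : V, inU q := Finset.sum_le_sum_of_subset (Finset.filter_subset _ _)
        _ = t := hsum_inU
    have hsplitW2 : ∑ q ∈ B, inW2 q + ∑ q ∈ Bc, inW2 q = ∑ q : V, inW2 q := by
      rw [hB, hBc]
      exact Finset.sum_filter_add_sum_filter_not _ _ _
    set b1 := (B.filter (fun q => (N q).card = 1)).card with hb1
    have hb1sum : ∑ q ∈ B, (if (N q).card = 1 then 1 else 0) = b1 := by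
      rw [hb1]
      exact (Finset.card_filter _ _).symm
    have hBsum : 2 * B.card + b1 ≤ ∑ q ∈ B, inW2 q := by
      have h2 : ∑ q ∈ B, (2 + (if (N q).card = 1 then 1 else 0)) ≤ ∑ q ∈ B, inW2 q := by
        apply Finset.sum_le_sum
        intro q hq
        refine hforced q ?_
        have := hq
        rw [hB] at this
        exact (Finset.mem_filter.mp this).2
      rw [Finset.sum_add_distrib, hb1sum, Finset.sum_const, smul_eq_mul, mul_comm] at h2
      exact h2
    -- omega extracts the tight structure
    have hkey : b1 = 0 ∧ (∑ q ∈ Bc, inW2 q) = 0 ∧ W3.card = 0 ∧ Bc.card = t := by omega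
    obtain ⟨hb1z, hBcW2z, hW3z, hBct⟩ := hkey
    -- U = Bc
    have hUBc : U = Bc := by
      apply Finset.eq_of_subset_of_card_le
      · intro u hu
        rw [hBc]
        refine Finset.mem_filter.mpr ⟨Finset.mem_univ u, ?_⟩
        intro h0
        have : u ∈ B.filter (fun q => (N q).card = 1) := by
          have hu2 : (N u).card = 1 := by
            have h := hu
            rw [hU] at h
            exact (Finset.mem_filter.mp h).2
          refine Finset.mem_filter.mpr ⟨?_, hu2⟩
          rw [hB]
          exact Finset.mem_filter.mpr ⟨Finset.mem_univ u, h0⟩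
        have : 0 < b1 := by
          rw [hb1]
          exact Finset.card_pos.mpr ⟨u, this⟩
        omega
      · rw [hBct, ht]
    have hUpos : ∀ u ∈ U, 1 ≤ inU u := by
      intro u hu
      rw [hUBc] at hu
      have := (Finset.mem_filter.mp hu).2
      omega
    -- each u in U has exactly one in-arc from U
    have hsumU_inU : ∑ q ∈ U, inU q = t := by
      have h0 : ∑ q ∈ B, inU q = 0 := by
        apply Finset.sum_eq_zero
        intro q hq
        exact (Finset.mem_filter.mp hq).2
      have hsplitU : ∑ q ∈ B, inU q + ∑ q ∈ Bc, inU q = ∑ q : V, inU q := by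
        rw [hB, hBc]
        exact Finset.sum_filter_add_sum_filter_not _ _ _
      rw [hUBc]
      omega
    have hm1 : ∀ u ∈ U, inU u = 1 := by
      intro u hu
      by_contra hne2
      have h2 : 2 ≤ inU u := by
        have := hUpos u hu
        omega
      have herase : ∑ q ∈ U.erase u, inU q + inU u = ∑ q ∈ U, inU q :=
        Finset.sum_erase_add U inU hu
      have hge : (U.erase u).card ≤ ∑ q ∈ U.erase u, inU q := by
        calc (U.erase u).card = ∑ q ∈ U.erase u, 1 := by simp
          _ ≤ ∑ q ∈ U.erase u, inU q := by
              apply Finset.sum_le_sum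
              intro q hq
              exact hUpos q (Finset.mem_of_mem_erase hq)
      have hec : (U.erase u).card = t - 1 := by
        rw [Finset.card_erase_of_mem hu, ht]
      have ht1' : 1 ≤ t := ht1
      omega
    have hk0 : ∀ u ∈ U, inW2 u = 0 := by
      intro u hu
      rw [hUBc] at hu
      exact Finset.sum_eq_zero_iff.mp hBcW2z u hu
    -- the successor function on U
    have hnext : ∀ u : {x // x ∈ U}, ∃ a : {x // x ∈ U}, A u.1 a.1 ∧ ∀ w, A u.1 w → w = a.1 := by
      intro u
      have hu1 : (N u.1).card = 1 := by
        have h : u.1 ∈ Finset.univ.filter (fun v => (N v).card = 1) := by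
          rw [← hU]
          exact u.2
        exact (Finset.mem_filter.mp h).2
      obtain ⟨a, ha⟩ := Finset.card_eq_one.mp hu1
      have haA : A u.1 a := by
        rw [← hmemN, ha]
        exact Finset.mem_singleton_self a
      have haU : a ∈ U := by
        have hmem : u.1 ∈ U.filter (fun x => A x a) := Finset.mem_filter.mpr ⟨u.2, haA⟩
        have h1 : ¬ inU a = 0 := by
          have : 0 < inU a := by
            rw [hinU]
            exact Finset.card_pos.mpr ⟨u.1, hmem⟩
          omega
        rw [hUBc, hBc]
        exact Finset.mem_filter.mpr ⟨Finset.mem_univ a, h1⟩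
      refine ⟨⟨a, haU⟩, haA, fun w hw => ?_⟩
      have : w ∈ N u.1 := (hmemN _ _).mpr hw
      rw [ha] at this
      exact Finset.mem_singleton.mp this
    choose F hF1 hF2 using hnext
    have hFinj : Function.Injective F := by
      intro u u' h
      have h1 : inU (F u).1 = 1 := hm1 _ (F u).2
      have hu : u.1 ∈ U.filter (fun x => A x (F u).1) := Finset.mem_filter.mpr ⟨u.2, hF1 u⟩
      have hu' : u'.1 ∈ U.filter (fun x => A x (F u).1) := by
        refine Finset.mem_filter.mpr ⟨u'.2, ?_⟩
        rw [h]
        exact hF1 u'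
      have hcard1 : (U.filter (fun x => A x (F u).1)).card ≤ 1 := by
        simp only [hinU] at h1
        omega
      exact Subtype.ext (Finset.card_le_one.mp hcard1 _ hu _ hu')
    have hFne : ∀ u, F u ≠ u := by
      intro u h
      apply hloop u.1
      have := hF1 u
      rw [h] at this
      exact this
    -- produce a periodic orbit
    have hUne : U.Nonempty := Finset.card_pos.mp (by omega)
    set x₀ : {x // x ∈ U} := ⟨hUne.choose, hUne.choose_spec⟩ with hx₀
    have hcardU : Fintype.card {x // x ∈ U} = t := by
      rw [Fintype.card_coe, ht]
    obtain ⟨i, j, hij, hgij⟩ := Fintype.exists_ne_map_eq_of_card_lt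
      (fun i : Fin (t + 1) => F^[i.1] x₀) (by rw [hcardU, Fintype.card_fin]; omega)
    have hper_ex : ∃ k, 0 < k ∧ k ≤ t ∧ F^[k] x₀ = x₀ := by
      have hgen : ∀ a b : Fin (t + 1), a < b → F^[a.1] x₀ = F^[b.1] x₀ →
          ∃ k, 0 < k ∧ k ≤ t ∧ F^[k] x₀ = x₀ := by
        intro a b hab heq
        have hab' : a.1 < b.1 := hab
        have heq2 : F^[a.1] (F^[b.1 - a.1] x₀) = F^[a.1] x₀ := by
          rw [← Function.iterate_add_apply]
          rw [show a.1 + (b.1 - a.1) = b.1 by omega]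
          exact heq.symm
        have := (hFinj.iterate a.1) heq2
        exact ⟨b.1 - a.1, by omega, by have := b.2; omega, this⟩
      rcases hij.lt_or_gt with hlt | hlt
      · exact hgen i j hlt hgij
      · exact hgen j i hlt hgij.symm
    obtain ⟨k, hk0, hkt, hkfix⟩ := hper_ex
    have hperk : Function.IsPeriodicPt F k x₀ := hkfix
    set p := Function.minimalPeriod F x₀ with hp
    have hppos : 0 < p := hperk.minimalPeriod_pos hk0
    have hple : p ≤ k := hperk.minimalPeriod_le hk0
    have hperp : Function.IsPeriodicPt F p x₀ := Function.isPeriodicPt_minimalPeriod F x₀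
    have hp2 : 2 ≤ p := by
      by_contra hcon
      have hp1 : p = 1 := by omega
      have : F^[1] x₀ = x₀ := by
        rw [← hp1]
        exact hperp
      simp only [Function.iterate_one] at this
      exact hFne x₀ this
    have key2 : ∀ a b, a < b → b < p → F^[a] x₀ = F^[b] x₀ → False := by
      intro a b hab hbp heq
      have heq2 : F^[a] (F^[b - a] x₀) = F^[a] x₀ := by
        rw [← Function.iterate_add_apply]
        rw [show a + (b - a) = b by omega]
        exact heq.symm
      have hfix := (hFinj.iterate a) heq2
      have hper' : Function.IsPeriodicPt F (b - a) x₀ := hfix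
      have := hper'.minimalPeriod_le (by omega)
      omega
    haveI : NeZero p := ⟨by omega⟩
    refine ⟨p, fun i => ((F^[i.val] x₀ : {x // x ∈ U}) : V), ⟨hp2, ?_, ?_⟩, ?_⟩
    · -- injective
      intro i j h
      have h2 : F^[i.val] x₀ = F^[j.val] x₀ := Subtype.coe_injective h
      have hv : i.val = j.val := by
        by_contra hne
        rcases Nat.lt_or_ge i.val j.val with h' | h'
        · exact key2 i.val j.val h' (ZMod.val_lt j) h2
        · exact key2 j.val i.val (by omega) (ZMod.val_lt i) h2.symm
      exact ZMod.val_injective p hv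
    · -- arcs
      intro i
      have hstep : F^[(i + 1).val] x₀ = F (F^[i.val] x₀) := by
        have hv : (i + 1).val = (i.val + 1) % p := by
          rw [ZMod.val_add]
          congr 1
          rw [ZMod.val_one_eq_one_mod, Nat.mod_eq_of_lt hp2]
        rw [hv, hperp.iterate_mod_apply, Function.iterate_succ_apply']
      show A ((F^[i.val] x₀ : {x // x ∈ U}) : V) ((F^[(i+1).val] x₀ : {x // x ∈ U}) : V)
      rw [hstep]
      exact hF1 _
    · -- length bound
      omega


/-- Main lemma: strong induction on the order, covering `t = 0` as well via `max t 1`. -/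
lemma main (n : ℕ) : ∀ (V : Type u) [Fintype V] (A : V → V → Prop),
    Fintype.card V = n → (∀ v, ¬ A v v) → (∀ v, 1 ≤ Nat.card {w // A v w}) → Nonempty V →
    ∃ m c, IsCycleOn A m c ∧
      m ≤ (Fintype.card V + max (Nat.card {u : V // Nat.card {w : V // A u w} = 1}) 1) / 2 := by
  induction n using Nat.strong_induction_on with
  | _ n IH =>
  intro V _ A hcard hloop hdeg hne
  classical
  have IH' : ∀ (W : Type u) [Fintype W] (B : W → W → Prop), Fintype.card W < Fintype.card V →
      (∀ v, ¬ B v v) → (∀ v, 1 ≤ Nat.card {w // B v w}) → Nonempty W →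
      ∃ m c, IsCycleOn B m c ∧
        m ≤ (Fintype.card W + max (Nat.card {u : W // Nat.card {w : W // B u w} = 1}) 1) / 2 := by
    intro W _ B hlt h1 h2 h3
    have := IH (Fintype.card W) (by omega) W B rfl h1 h2 h3
    exact this
  by_cases ht : 1 ≤ Nat.card {u : V // Nat.card {w : V // A u w} = 1}
  · obtain ⟨m, c, h1, h2⟩ := step A IH' hloop hdeg ht
    refine ⟨m, c, h1, ?_⟩
    rw [max_eq_left ht]
    exact h2
  · -- t = 0 : make one vertex have out-degree one by deleting arcs
    have ht0 : Nat.card {u : V // Nat.card {w : V // A u w} = 1} = 0 := by omega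
    obtain ⟨x₀⟩ := hne
    have hx : 0 < Nat.card {w : V // A x₀ w} := hdeg x₀
    obtain ⟨a, ha⟩ : Nonempty {w : V // A x₀ w} := (Nat.card_pos_iff.mp hx).1
    set A' : V → V → Prop := fun v w => A v w ∧ (v = x₀ → w = a) with hA'
    have hloop' : ∀ v, ¬ A' v v := fun v h => hloop v h.1
    have heq_ne : ∀ v, v ≠ x₀ → Nat.card {w : V // A' v w} = Nat.card {w : V // A v w} := by
      intro v hv
      apply Nat.card_congr
      apply Equiv.subtypeEquivRight
      intro w
      simp [hA', hv]
    have heq_x0 : Nat.card {w : V // A' x₀ w} = 1 := by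
      have hiff : ∀ w, A' x₀ w ↔ w = a := by
        intro w
        constructor
        · exact fun h => h.2 rfl
        · rintro rfl
          exact ⟨ha, fun _ => rfl⟩
      rw [Nat.card_congr (Equiv.subtypeEquivRight hiff), Nat.card_eq_fintype_card,
        Fintype.card_subtype_eq]
    have hdeg' : ∀ v, 1 ≤ Nat.card {w : V // A' v w} := by
      intro v
      by_cases hv : v = x₀
      · subst hv
        rw [heq_x0]
      · rw [heq_ne v hv]
        exact hdeg v
    have ht1' : Nat.card {u : V // Nat.card {w : V // A' u w} = 1} = 1 := by
      have hiff : ∀ u, (Nat.card {w : V // A' u w} = 1) ↔ u = x₀ := by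
        intro u
        constructor
        · intro h
          by_contra hu
          rw [heq_ne u hu] at h
          have hpos : 0 < Nat.card {u' : V // Nat.card {w : V // A u' w} = 1} := by
            apply Nat.card_pos_iff.mpr
            exact ⟨⟨⟨u, h⟩⟩, inferInstance⟩
          omega
        · rintro rfl
          exact heq_x0
      rw [Nat.card_congr (Equiv.subtypeEquivRight hiff), Nat.card_eq_fintype_card,
        Fintype.card_subtype_eq]
    obtain ⟨m, c, h1, h2⟩ := step A' IH' hloop' hdeg' (by rw [ht1'])
    refine ⟨m, c, ⟨h1.1, h1.2.1, fun i => (h1.2.2 i).1⟩, ?_⟩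
    rw [ht0]
    rw [ht1'] at h2
    simpa using h2

end ShenAux

/-- Shen's theorem, case `t ≥ 1`: a loopless digraph of order `n` with minimum
out-degree at least `1` in which `t ≥ 1` vertices have out-degree exactly `1`
contains a directed cycle of length at most `⌈(n + t - 1)/2⌉`. -/
theorem stmt_6 {V : Type*} [Fintype V] (A : V → V → Prop)
    (hloop : ∀ v, ¬ A v v)
    (hdeg : ∀ v : V, 1 ≤ Nat.card {w : V // A v w})
    (t : ℕ) (ht : t = Nat.card {u : V // Nat.card {w : V // A u w} = 1})
    (ht1 : 1 ≤ t) :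
    ∃ (m : ℕ) (c : ZMod m → V), IsCycleOn A m c ∧
      m ≤ ((Fintype.card V + t - 1) + 1) / 2 := by
  have hne : Nonempty V := by
    have hpos : 0 < Nat.card {u : V // Nat.card {w : V // A u w} = 1} := by omega
    obtain ⟨⟨u, _⟩⟩ := (Nat.card_pos_iff.mp hpos).1
    exact ⟨u⟩
  obtain ⟨m, c, hc, hm⟩ := ShenAux.main (Fintype.card V) V A rfl hloop hdeg hne
  refine ⟨m, c, hc, ?_⟩
  rw [← ht, max_eq_left ht1] at hm
  omega
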